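/- Let X be a finiteness space and k a field with the discrete topology. The topological vector space k⟨X⟩ is metrizable if and only if there exists an increasing sequence (e'(n))_{n∈ℕ} of elements of F(X)^⊥ such that every e' ∈ F(X)^⊥ is contained in e'(n) for some n ∈ ℕ. -/

import Mathlib

namespace Resource

def orth {I : Type*} (F : Set (Set I)) : Set (Set I) := {e' | ∀ e ∈ F, (e ∩ e').Finite}

structure FinSpace (I : Type*) where
  F : Set (Set I)
  biorth : orth (orth F) ⊆ F

lemma subset_biorth {I : Type*} (G : Set (Set I)) : G ⊆ orth (orth G) := by
  intro e he g hg
  have := hg e he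
  rwa [Set.inter_comm] at this

lemma orth_anti {I : Type*} {G H : Set (Set I)} (h : G ⊆ H) : orth H ⊆ orth G :=
  fun g hg e he => hg e (h he)

def FinSpace.ofOrth {I : Type*} (G : Set (Set I)) : FinSpace I :=
  ⟨orth G, orth_anti (subset_biorth G)⟩

lemma FinSpace.empty_mem {I : Type*} (X : FinSpace I) : ∅ ∈ X.F :=
  X.biorth (fun g _ => by simp)

lemma FinSpace.mem_of_subset {I : Type*} (X : FinSpace I) {e f : Set I}
    (he : e ∈ X.F) (h : f ⊆ e) : f ∈ X.F := by
  refine X.biorth (fun g hg => ?_)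
  exact ((hg e he).subset (fun x hx => ⟨h hx.2, hx.1⟩))

lemma FinSpace.union_mem {I : Type*} (X : FinSpace I) {e f : Set I}
    (he : e ∈ X.F) (hf : f ∈ X.F) : e ∪ f ∈ X.F := by
  refine X.biorth (fun g hg => ?_)
  have h1 := hg e he
  have h2 := hg f hf
  rw [Set.inter_comm] at h1 h2
  rw [Set.inter_union_distrib_left]
  exact h1.union h2

def fsSub (k : Type*) [Field k] {I : Type*} (X : FinSpace I) : Submodule k (I → k) where
  carrier := {a | {s | a s ≠ 0} ∈ X.F}
  add_mem' := by
    intro a b ha hb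
    refine X.mem_of_subset (X.union_mem ha hb) ?_
    intro s hs
    by_contra h
    simp only [Set.mem_union, Set.mem_setOf_eq, not_or, not_not] at h
    exact hs (by simp [Pi.add_apply, h.1, h.2])
  zero_mem' := by
    refine X.mem_of_subset X.empty_mem ?_
    intro s hs
    simp at hs
  smul_mem' := by
    intro c a ha
    refine X.mem_of_subset ha ?_
    intro s hs
    by_contra h
    simp only [Set.mem_setOf_eq, not_not] at h
    exact hs (by simp [Pi.smul_apply, h])

def fsTop (k : Type*) [Field k] {I : Type*} (X : FinSpace I) :
    TopologicalSpace (fsSub k X) where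
  IsOpen U := ∀ a ∈ U, ∃ e' ∈ orth X.F, ∀ b : fsSub k X, (∀ s ∈ e', b.1 s = a.1 s) → b ∈ U
  isOpen_univ := by
    intro a _
    exact ⟨∅, fun e _ => by simp, fun b _ => trivial⟩
  isOpen_inter := by
    rintro U V hU hV a ⟨haU, haV⟩
    obtain ⟨e₁, he₁, h₁⟩ := hU a haU
    obtain ⟨e₂, he₂, h₂⟩ := hV a haV
    refine ⟨e₁ ∪ e₂, fun e he => ?_, fun b hb => ?_⟩
    · rw [Set.inter_union_distrib_left]
      exact (he₁ e he).union (he₂ e he)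
    · exact ⟨h₁ b (fun s hs => hb s (Or.inl hs)), h₂ b (fun s hs => hb s (Or.inr hs))⟩
  isOpen_sUnion := by
    rintro 𝒮 h a ⟨U, hU, haU⟩
    obtain ⟨e', he', hb⟩ := h U hU a haU
    exact ⟨e', he', fun b hbs => ⟨U, hU, hb b hbs⟩⟩


lemma FinSpace.singleton_mem' {I : Type*} (X : FinSpace I) (s : I) : {s} ∈ X.F :=
  X.biorth (fun _ _ => (Set.finite_singleton s).subset Set.inter_subset_right)

lemma singleton_orth' {I : Type*} (X : FinSpace I) (s : I) : {s} ∈ orth X.F :=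
  fun _ _ => (Set.finite_singleton s).subset Set.inter_subset_right

def Vset (k : Type*) [Field k] {I : Type*} (X : FinSpace I) (f : Set I) : Set (fsSub k X) :=
  {b | ∀ s ∈ f, b.1 s = 0}

lemma Vset_zero (k : Type*) [Field k] {I : Type*} (X : FinSpace I) (f : Set I) :
    (0 : fsSub k X) ∈ Vset k X f := fun _ _ => rfl

open Classical in
noncomputable def indic (k : Type*) [Field k] {I : Type*} (X : FinSpace I) (s : I) :
    fsSub k X :=
  ⟨fun t => if t = s then 1 else 0, by
    refine X.mem_of_subset (X.singleton_mem' s) fun t ht => ?_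
    by_contra h
    exact ht (if_neg h)⟩

lemma Vset_subset (k : Type*) [Field k] {I : Type*} (X : FinSpace I) {f g : Set I}
    (h : Vset k X f ⊆ Vset k X g) : g ⊆ f := by
  classical
  intro s hs
  by_contra hsf
  have h1 : indic k X s ∈ Vset k X f := by
    intro t ht
    refine if_neg fun ets => ?_
    subst ets
    exact hsf ht
  have h2 := h h1 s hs
  simp [indic] at h2


theorem statement19 {I : Type*} (k : Type*) [Field k] (X : FinSpace I) :
    letI : TopologicalSpace (fsSub k X) := fsTop k X
    (TopologicalSpace.MetrizableSpace (fsSub k X) ↔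
      ∃ e' : ℕ → Set I, Monotone e' ∧ (∀ n, e' n ∈ orth X.F) ∧
        ∀ f ∈ orth X.F, ∃ n, f ⊆ e' n) := by
  letI : TopologicalSpace (fsSub k X) := fsTop k X
  show TopologicalSpace.MetrizableSpace (fsSub k X) ↔
      ∃ e' : ℕ → Set I, Monotone e' ∧ (∀ n, e' n ∈ orth X.F) ∧
        ∀ f ∈ orth X.F, ∃ n, f ⊆ e' n
  constructor
  · intro hm
    haveI := hm
    haveI : FirstCountableTopology (fsSub k X) :=
      TopologicalSpace.PseudoMetrizableSpace.firstCountableTopology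
    haveI : (nhds (0 : fsSub k X)).IsCountablyGenerated :=
      FirstCountableTopology.nhds_generated_countable 0
    obtain ⟨U, hU⟩ := (nhds (0 : fsSub k X)).exists_antitone_basis
    have key : ∀ n, ∃ f, f ∈ orth X.F ∧ Vset k X f ⊆ U n := by
      intro n
      have h0 : U n ∈ nhds (0 : fsSub k X) := hU.toHasBasis.mem_of_mem trivial
      obtain ⟨W, hWU, hW, h0W⟩ := mem_nhds_iff.1 h0
      obtain ⟨f, hf, hprop⟩ := hW 0 h0W
      exact ⟨f, hf, fun b hb => hWU (hprop b (fun s hs => hb s hs))⟩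
    choose f hf hsub using key
    refine ⟨fun n => ⋃ i ∈ Set.Iic n, f i, ?_, ?_, ?_⟩
    · intro m n hmn
      exact Set.biUnion_subset_biUnion_left (Set.Iic_subset_Iic.2 hmn)
    · intro n g hg
      rw [Set.inter_iUnion₂]
      exact (Set.finite_Iic n).biUnion (fun i _ => hf i g hg)
    · intro g hg
      have hVopen : IsOpen (Vset k X g) := by
        intro a ha
        exact ⟨g, hg, fun b hb s hs => (hb s hs).trans (ha s hs)⟩
      have hVnhds : Vset k X g ∈ nhds (0 : fsSub k X) :=
        hVopen.mem_nhds (Vset_zero k X g)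
      obtain ⟨n, -, hn⟩ := hU.toHasBasis.mem_iff.1 hVnhds
      have hgf : g ⊆ f n := Vset_subset k X ((hsub n).trans hn)
      exact ⟨n, hgf.trans (Set.subset_biUnion_of_mem Set.self_mem_Iic)⟩
  · rintro ⟨e, hmono, horth, hcof⟩
    classical
    set d : fsSub k X → fsSub k X → ℝ := fun a b =>
      if h : ∃ n, ∃ s ∈ e n, a.1 s ≠ b.1 s then (2⁻¹ : ℝ) ^ (Nat.find h) else 0 with hd
    have hd0 : ∀ a b, 0 ≤ d a b := by
      intro a b
      rw [hd]
      dsimp only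
      split
      · positivity
      · exact le_refl 0
    have heq : ∀ a b : fsSub k X, (¬ ∃ n, ∃ s ∈ e n, a.1 s ≠ b.1 s) → a = b := by
      intro a b h
      push_neg at h
      refine Subtype.ext (funext fun s => ?_)
      obtain ⟨n, hn⟩ := hcof {s} (singleton_orth' X s)
      exact h n s (hn rfl)
    have hlt : ∀ (a b : fsSub k X) (n : ℕ),
        d a b < (2⁻¹ : ℝ) ^ n ↔ ∀ s ∈ e n, a.1 s = b.1 s := by
      intro a b n
      rw [hd]
      dsimp only
      split
      · rename_i h
        rw [pow_lt_pow_iff_right_of_lt_one₀ (by norm_num) (by norm_num)]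
        constructor
        · intro hn s hs
          by_contra hne
          exact Nat.find_min h hn ⟨s, hs, hne⟩
        · intro hall
          rw [Nat.lt_find_iff]
          rintro m hm ⟨s, hs, hne⟩
          exact hne (hall s (hmono hm hs))
      · rename_i h
        push_neg at h
        exact iff_of_true (by positivity) (h n)
    have dself : ∀ a : fsSub k X, d a a = 0 := by
      intro a
      rw [hd]
      exact dif_neg (by rintro ⟨n, s, -, hne⟩; exact hne rfl)
    have dcomm : ∀ a b : fsSub k X, d a b = d b a := by
      intro a b
      rw [hd]
      dsimp only
      by_cases h : ∃ n, ∃ s ∈ e n, a.1 s ≠ b.1 s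
      · have h' : ∃ n, ∃ s ∈ e n, b.1 s ≠ a.1 s := by
          obtain ⟨n, s, hs, hne⟩ := h
          exact ⟨n, s, hs, hne.symm⟩
        rw [dif_pos h, dif_pos h']
        congr 1
        apply le_antisymm
        · obtain ⟨s, hs, hne⟩ := Nat.find_spec h'
          exact Nat.find_le ⟨s, hs, hne.symm⟩
        · obtain ⟨s, hs, hne⟩ := Nat.find_spec h
          exact Nat.find_le ⟨s, hs, hne.symm⟩
      · have h' : ¬ ∃ n, ∃ s ∈ e n, b.1 s ≠ a.1 s := by
          rintro ⟨n, s, hs, hne⟩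
          exact h ⟨n, s, hs, hne.symm⟩
        rw [dif_neg h, dif_neg h']
    have dtri : ∀ a b c : fsSub k X, d a c ≤ d a b + d b c := by
      intro a b c
      have hmax : d a c ≤ max (d a b) (d b c) := by
        by_cases h : ∃ n, ∃ s ∈ e n, a.1 s ≠ c.1 s
        · obtain ⟨s, hs, hne⟩ := Nat.find_spec h
          rcases ne_or_eq (a.1 s) (b.1 s) with h1 | h1
          · have hab : ∃ n, ∃ s ∈ e n, a.1 s ≠ b.1 s := ⟨Nat.find h, s, hs, h1⟩
            refine le_max_of_le_left ?_
            rw [hd]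
            dsimp only
            rw [dif_pos h, dif_pos hab]
            exact pow_le_pow_of_le_one (by norm_num) (by norm_num)
              (Nat.find_le ⟨s, hs, h1⟩)
          · have h2 : b.1 s ≠ c.1 s := h1 ▸ hne
            have hbc : ∃ n, ∃ s ∈ e n, b.1 s ≠ c.1 s := ⟨Nat.find h, s, hs, h2⟩
            refine le_max_of_le_right ?_
            rw [hd]
            dsimp only
            rw [dif_pos h, dif_pos hbc]
            exact pow_le_pow_of_le_one (by norm_num) (by norm_num)
              (Nat.find_le ⟨s, hs, h2⟩)
        · have : d a c = 0 := by rw [hd]; exact dif_neg h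
          rw [this]
          exact le_max_of_le_left (hd0 a b)
      exact hmax.trans (max_le (le_add_of_nonneg_right (hd0 b c))
        (le_add_of_nonneg_left (hd0 a b)))
    have deq : ∀ a b : fsSub k X, d a b = 0 → a = b := by
      intro a b h
      by_cases hx : ∃ n, ∃ s ∈ e n, a.1 s ≠ b.1 s
      · exfalso
        rw [hd] at h
        dsimp only at h
        rw [dif_pos hx] at h
        exact (pow_pos (by norm_num : (0:ℝ) < 2⁻¹) _).ne' h
      · exact heq a b hx
    have H : ∀ U : Set (fsSub k X),
        IsOpen U ↔ ∀ x ∈ U, ∃ ε > 0, ∀ y, d x y < ε → y ∈ U := by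
      intro U
      constructor
      · intro hUo x hx
        obtain ⟨g, hg, hprop⟩ := hUo x hx
        obtain ⟨n, hn⟩ := hcof g hg
        refine ⟨(2⁻¹ : ℝ) ^ n, by positivity, fun y hy => ?_⟩
        have hxy := (hlt x y n).1 hy
        exact hprop y fun s hs => (hxy s (hn hs)).symm
      · intro hball x hx
        obtain ⟨ε, hε, hb⟩ := hball x hx
        obtain ⟨n, hn⟩ := exists_pow_lt_of_lt_one hε (by norm_num : (2⁻¹:ℝ) < 1)
        refine ⟨e n, horth n, fun b hbb => hb b ?_⟩
        exact ((hlt x b n).2 fun s hs => (hbb s hs).symm).trans hn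
    letI m : MetricSpace (fsSub k X) := MetricSpace.ofDistTopology d dself dcomm dtri H deq
    exact inferInstance


end Resource
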